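/- One-sided HLLC positivity (Lemma 2.8): for any two admissible states U₀, U₁ ∈ G and any λ > 0 satisfying λ · max{α_max(U₀), α_max(U₁)} ≤ 1, one has U₁ − λ(F(U₁) − F^hllc(U₀, U₁)) ∈ G and U₀ − λ(F^hllc(U₀, U₁) − F(U₀)) ∈ G. -/

import Mathlib

noncomputable section

/-- A 1D state `U = (ρ, m, E)`. -/
abbrev St : Type := ℝ × ℝ × ℝ

/-- The admissible set `G = {(ρ, m, E) : ρ > 0, E − m²/(2ρ) > 0}`. -/
def admG : Set St := {U | 0 < U.1 ∧ 0 < U.2.2 - U.2.1 ^ 2 / (2 * U.1)}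

/-- The velocity `u = m/ρ`. -/
def vel (U : St) : ℝ := U.2.1 / U.1

/-- The pressure `p = (γ−1)(E − m²/(2ρ))`. -/
def press (γ : ℝ) (U : St) : ℝ := (γ - 1) * (U.2.2 - U.2.1 ^ 2 / (2 * U.1))

/-- The sound speed `√(γ p / ρ)`. -/
def sound (γ : ℝ) (U : St) : ℝ := Real.sqrt (γ * press γ U / U.1)

/-- The specific internal energy `e = (E − m²/(2ρ))/ρ`. -/
def specE (U : St) : ℝ := (U.2.2 - U.2.1 ^ 2 / (2 * U.1)) / U.1

/-- The Euler flux `F(U) = (ρu, ρu² + p, (E+p)u)`. -/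
def eulerF (γ : ℝ) (U : St) : St :=
  (U.1 * vel U, U.1 * vel U ^ 2 + press γ U, (U.2.2 + press γ U) * vel U)

/-- `α₋(U) = u − √(γp/ρ)`. -/
def alphaMinus (γ : ℝ) (U : St) : ℝ := vel U - sound γ U

/-- `α₊(U) = u + √(γp/ρ)`. -/
def alphaPlus (γ : ℝ) (U : St) : ℝ := vel U + sound γ U

/-- `α_max(U) = |u| + √(γp/ρ)`. -/
def alphaMax (γ : ℝ) (U : St) : ℝ := |vel U| + sound γ U

/-- Left wave speed `S_L = min(α₋(U_L), α₋(U_R))`. -/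
def SL (γ : ℝ) (UL UR : St) : ℝ := min (alphaMinus γ UL) (alphaMinus γ UR)

/-- Right wave speed `S_R = max(α₊(U_L), α₊(U_R))`. -/
def SR (γ : ℝ) (UL UR : St) : ℝ := max (alphaPlus γ UL) (alphaPlus γ UR)

/-- Middle wave speed `S_*`. -/
def Sstar (γ : ℝ) (UL UR : St) : ℝ :=
  (press γ UR - press γ UL + UL.1 * vel UL * (SL γ UL UR - vel UL)
      - UR.1 * vel UR * (SR γ UL UR - vel UR)) /
    (UL.1 * (SL γ UL UR - vel UL) - UR.1 * (SR γ UL UR - vel UR))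

/-- HLLC intermediate state
`U_{*i} = ρ_i (S_i − u_i)/(S_i − S_*) · (1, S_*, E_i/ρ_i + (S_* − u_i)(S_* + p_i/(ρ_i(S_i − u_i))))`. -/
def Ustar (γ : ℝ) (Si Sst : ℝ) (Ui : St) : St :=
  (Ui.1 * ((Si - vel Ui) / (Si - Sst))) •
    (((1 : ℝ), Sst,
      Ui.2.2 / Ui.1 + (Sst - vel Ui) * (Sst + press γ Ui / (Ui.1 * (Si - vel Ui)))) : St)

/-- Intermediate flux `F_{*i} = F(U_i) + S_i (U_{*i} − U_i)`. -/
def Fstar (γ : ℝ) (Si Sst : ℝ) (Ui : St) : St :=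
  eulerF γ Ui + Si • (Ustar γ Si Sst Ui - Ui)

/-- The HLLC numerical flux. -/
def Fhllc (γ : ℝ) (UL UR : St) : St :=
  if 0 ≤ SL γ UL UR then eulerF γ UL
  else if 0 ≤ Sstar γ UL UR then Fstar γ (SL γ UL UR) (Sstar γ UL UR) UL
  else if 0 ≤ SR γ UL UR then Fstar γ (SR γ UL UR) (Sstar γ UL UR) UR
  else eulerF γ UR

end

lemma mem_admG_iff {U : St} : U ∈ admG ↔ 0 < U.1 ∧ U.2.1 ^ 2 < 2 * U.1 * U.2.2 := by
  obtain ⟨r, m, E⟩ := U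
  simp only [admG, Set.mem_setOf_eq]
  constructor
  · rintro ⟨h1, h2⟩
    refine ⟨h1, ?_⟩
    have h2r : 0 < 2 * r := by linarith
    rw [sub_pos, div_lt_iff₀ h2r] at h2
    nlinarith
  · rintro ⟨h1, h2⟩
    refine ⟨h1, ?_⟩
    have h2r : 0 < 2 * r := by linarith
    rw [sub_pos, div_lt_iff₀ h2r]
    nlinarith

lemma admG_add {U V : St} (hU : U ∈ admG) (hV : V ∈ admG) : U + V ∈ admG := by
  rw [mem_admG_iff] at *
  obtain ⟨h1, h2⟩ := hU; obtain ⟨h3, h4⟩ := hV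
  refine ⟨by simpa using by positivity, ?_⟩
  simp only [Prod.fst_add, Prod.snd_add]
  nlinarith [sq_nonneg (U.2.1 * V.1 - V.2.1 * U.1), mul_pos h1 h3,
    mul_lt_mul_of_pos_left h2 h3, mul_lt_mul_of_pos_left h4 h1]

lemma admG_smul {U : St} (hU : U ∈ admG) {t : ℝ} (ht : 0 < t) : t • U ∈ admG := by
  rw [mem_admG_iff] at *
  obtain ⟨h1, h2⟩ := hU
  refine ⟨by simpa using mul_pos ht h1, ?_⟩
  simp only [Prod.smul_fst, Prod.smul_snd, smul_eq_mul]
  nlinarith [mul_lt_mul_of_pos_left h2 (mul_pos ht ht)]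

lemma admG_nsa {U V : St} (hU : U ∈ admG) (hV : V ∈ admG) {t : ℝ} (ht : 0 ≤ t) :
    t • U + V ∈ admG := by
  rcases eq_or_lt_of_le ht with h | h
  · simpa [← h] using hV
  · exact admG_add (admG_smul hU h) hV

lemma admG_convex2 {U V : St} (hU : U ∈ admG) (hV : V ∈ admG) {a b : ℝ}
    (ha : 0 ≤ a) (hb : 0 ≤ b) (hab : a + b = 1) : a • U + b • V ∈ admG := by
  rcases eq_or_lt_of_le hb with h | h
  · have : a = 1 := by linarith
    simpa [this, ← h] using hU
  · exact admG_nsa hU (admG_smul hV h) ha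

lemma ustar_mem (γ : ℝ) (hγ : 1 < γ) (U : St) (hU : U ∈ admG) (Si st : ℝ)
    (ha2 : γ * press γ U / U.1 ≤ (Si - vel U) ^ 2)
    (hsgn : 0 < (Si - vel U) * (Si - st)) :
    Ustar γ Si st U ∈ admG := by
  obtain ⟨hρ, hE⟩ := hU
  set ρ := U.1 with hρdef
  set u := vel U with hudef
  set p := press γ U with hpdef
  set a := Si - vel U with hadef
  have hp : 0 < p := by
    have : 0 < γ - 1 := by linarith
    exact mul_pos this hE
  have ha : a ≠ 0 := by
    rintro h; rw [h] at hsgn; simp at hsgn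
  have hb : Si - st ≠ 0 := by
    rintro h; rw [h] at hsgn; simp at hsgn
  have hfrac : 0 < a / (Si - st) := by
    rcases mul_pos_iff.1 hsgn with ⟨h1, h2⟩ | ⟨h1, h2⟩
    · exact div_pos h1 h2
    · exact div_pos_of_neg_of_neg h1 h2
  have hApos : 0 < ρ * (a / (Si - st)) := mul_pos hρ hfrac
  have hρa2 : γ * p ≤ ρ * a ^ 2 := by
    rw [div_le_iff₀ hρ] at ha2
    nlinarith [ha2]
  set s := st - u with hsdef
  set η := U.2.2 / ρ + (st - u) * (st + p / (ρ * (Si - vel U))) with hηdef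
  have hT : 0 < 2 * p * ρ * a ^ 2 + (γ - 1) * ρ ^ 2 * a ^ 2 * s ^ 2
      + 2 * (γ - 1) * ρ * a * p * s := by
    nlinarith [sq_nonneg (ρ * a * s + p), mul_pos hp hp, sq_nonneg a, mul_pos hρ hρ,
      mul_pos (mul_pos hp hp) (sub_pos.2 hγ)]
  have hM : 0 < 2 * (γ - 1) * ρ ^ 2 * a ^ 2 := by
    have : 0 < γ - 1 := by linarith
    positivity
  have hu : u = U.2.1 / ρ := rfl
  have hPdef : p = (γ - 1) * (U.2.2 - U.2.1 ^ 2 / (2 * ρ)) := rfl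
  have key : (η - st ^ 2 / 2) * (2 * (γ - 1) * ρ ^ 2 * a ^ 2)
      = 2 * p * ρ * a ^ 2 + (γ - 1) * ρ ^ 2 * a ^ 2 * s ^ 2 + 2 * (γ - 1) * ρ * a * p * s := by
    rw [hηdef, hsdef, hu, hPdef, ← hadef]
    have hγ1 : γ - 1 ≠ 0 := by intro h; linarith
    field_simp
    ring
  have hX : 0 < η - st ^ 2 / 2 := by
    have := eq_div_of_mul_eq hM.ne' key
    rw [this]
    exact div_pos hT hM
  have hbase : ((1 : ℝ), st, η) ∈ admG := by
    constructor
    · norm_num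
    · simpa using by linarith [hX]
  exact admG_smul hbase (t:=ρ * (a / (Si - st))) hApos

lemma st_eq_iff {x y : St} : x = y ↔ x.1 = y.1 ∧ x.2.1 = y.2.1 ∧ x.2.2 = y.2.2 := by
  rw [Prod.ext_iff, Prod.ext_iff]

lemma fstar_eq (γ Si st : ℝ) (U : St) (hρ : U.1 ≠ 0) (ha : Si - vel U ≠ 0) (hb : Si - st ≠ 0) :
    Fstar γ Si st U = st • Ustar γ Si st U +
      ((0 : ℝ), press γ U + U.1 * (Si - vel U) * (st - vel U),
        (press γ U + U.1 * (Si - vel U) * (st - vel U)) * st) := by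
  obtain ⟨r, m, E⟩ := U
  simp only [vel] at ha
  have ha' : Si * r - m ≠ 0 := by
    intro h
    apply ha
    field_simp
    linarith [h]
  have ha'' : r * Si - m ≠ 0 := by intro h; apply ha'; linarith
  rw [st_eq_iff]
  refine ⟨?_, ?_, ?_⟩ <;>
    simp only [Fstar, Ustar, eulerF, press, vel, Prod.fst_add, Prod.snd_add, Prod.smul_fst,
      Prod.smul_snd, Prod.fst_sub, Prod.snd_sub, smul_eq_mul] <;>
    field_simp [ha', ha''] <;> ring

lemma sstar_lb (γ rL rR uL uR pL pR cL cR sL sR : ℝ) (hγ : 1 < γ)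
    (hrL : 0 < rL) (hrR : 0 < rR) (hpL : 0 < pL) (hpR : 0 < pR)
    (hcL0 : 0 < cL) (hcR0 : 0 < cR)
    (hcL2 : rL * cL ^ 2 = γ * pL) (hcR2 : rR * cR ^ 2 = γ * pR)
    (h1 : sL - uL ≤ -cL) (h2 : sL ≤ uR - cR) (h3 : cR ≤ sR - uR) :
    pR - pL + rL * uL * (sL - uL) - rR * uR * (sR - uR)
      < sL * (rL * (sL - uL) - rR * (sR - uR)) := by
  have hsq : cL ^ 2 ≤ (sL - uL) ^ 2 := by nlinarith
  have i1 : (sR - uR) * (sL - uR) ≤ -(cR ^ 2) := by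
    have j1 : (sR - uR) * (sL - uR) ≤ cR * (sL - uR) :=
      mul_le_mul_of_nonpos_right h3 (by linarith)
    have j2 : cR * (sL - uR) ≤ cR * (-cR) :=
      mul_le_mul_of_nonneg_left (by linarith) hcR0.le
    nlinarith [j1, j2]
  nlinarith [mul_le_mul_of_nonneg_left hsq hrL.le,
    mul_le_mul_of_nonneg_left i1 hrR.le]

lemma sstar_ub (γ rL rR uL uR pL pR cL cR sL sR : ℝ) (hγ : 1 < γ)
    (hrL : 0 < rL) (hrR : 0 < rR) (hpL : 0 < pL) (hpR : 0 < pR)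
    (hcL0 : 0 < cL) (hcR0 : 0 < cR)
    (hcL2 : rL * cL ^ 2 = γ * pL) (hcR2 : rR * cR ^ 2 = γ * pR)
    (h1 : sL - uL ≤ -cL) (h2 : uL + cL ≤ sR) (h3 : cR ≤ sR - uR) :
    sR * (rL * (sL - uL) - rR * (sR - uR))
      < pR - pL + rL * uL * (sL - uL) - rR * uR * (sR - uR) := by
  have hsq : cR ^ 2 ≤ (sR - uR) ^ 2 := by nlinarith
  have i2 : cL ^ 2 ≤ (sL - uL) * (uL - sR) := by
    nlinarith [mul_nonneg (by linarith : (0:ℝ) ≤ -cL - (sL - uL))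
        (by linarith : (0:ℝ) ≤ -cL - (uL - sR)),
      mul_le_mul_of_nonneg_left h1 hcL0.le,
      mul_le_mul_of_nonneg_left (by linarith : uL - sR ≤ -cL) hcL0.le]
  nlinarith [mul_le_mul_of_nonneg_left hsq hrR.le,
    mul_le_mul_of_nonneg_left i2 hrL.le]


lemma pstar_scalar (pL pR rL rR uL uR sL sR : ℝ)
    (hD : rL * (sL - uL) - rR * (sR - uR) ≠ 0) :
    pL + rL * (sL - uL) *
        ((pR - pL + rL * uL * (sL - uL) - rR * uR * (sR - uR)) /
            (rL * (sL - uL) - rR * (sR - uR)) - uL)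
      = pR + rR * (sR - uR) *
        ((pR - pL + rL * uL * (sL - uL) - rR * uR * (sR - uR)) /
            (rL * (sL - uL) - rR * (sR - uR)) - uR) := by
  field_simp
  ring

set_option maxHeartbeats 2000000 in
/-- Lemma 2.8: one-sided HLLC positivity. -/
theorem hllc_one_sided_positivity (γ : ℝ) (hγ : 1 < γ)
    (U₀ U₁ : St) (hU₀ : U₀ ∈ admG) (hU₁ : U₁ ∈ admG)
    (lam : ℝ) (hlam : 0 < lam)
    (hcfl : lam * max (alphaMax γ U₀) (alphaMax γ U₁) ≤ 1) :
    U₁ - lam • (eulerF γ U₁ - Fhllc γ U₀ U₁) ∈ admG ∧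
      U₀ - lam • (Fhllc γ U₀ U₁ - eulerF γ U₀) ∈ admG := by
  obtain ⟨hrL, heL⟩ := hU₀
  obtain ⟨hrR, heR⟩ := hU₁
  have hU₀' : U₀ ∈ admG := ⟨hrL, heL⟩
  have hU₁' : U₁ ∈ admG := ⟨hrR, heR⟩
  have hγ0 : (0 : ℝ) < γ - 1 := by linarith
  set uL := vel U₀ with huL
  set uR := vel U₁ with huR
  set pL := press γ U₀ with hpLdef
  set pR := press γ U₁ with hpRdef
  set cL := sound γ U₀ with hcLdef
  set cR := sound γ U₁ with hcRdef
  have hpL : 0 < pL := mul_pos hγ0 heL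
  have hpR : 0 < pR := mul_pos hγ0 heR
  have hcL2 : cL ^ 2 = γ * pL / U₀.1 := Real.sq_sqrt (by positivity)
  have hcR2 : cR ^ 2 = γ * pR / U₁.1 := Real.sq_sqrt (by positivity)
  have hcL0 : 0 < cL := Real.sqrt_pos.2 (by positivity)
  have hcR0 : 0 < cR := Real.sqrt_pos.2 (by positivity)
  have hcL2' : U₀.1 * cL ^ 2 = γ * pL := by rw [hcL2]; field_simp
  have hcR2' : U₁.1 * cR ^ 2 = γ * pR := by rw [hcR2]; field_simp
  set sL := SL γ U₀ U₁ with hsLdef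
  set sR := SR γ U₀ U₁ with hsRdef
  set st := Sstar γ U₀ U₁ with hstdef
  have hsL1 : sL ≤ uL - cL := min_le_left _ _
  have hsL2 : sL ≤ uR - cR := min_le_right _ _
  have hsR1 : uL + cL ≤ sR := le_max_left _ _
  have hsR2 : uR + cR ≤ sR := le_max_right _ _
  have haL : sL - uL ≤ -cL := by linarith
  have haLneg : sL - uL < 0 := by linarith
  have haR : cR ≤ sR - uR := by linarith
  have haRpos : 0 < sR - uR := by linarith
  have hDneg : U₀.1 * (sL - uL) - U₁.1 * (sR - uR) < 0 := by
    linarith [mul_pos hrR haRpos, mul_pos hrL (neg_pos.2 haLneg)]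
  have hstval : st = (pR - pL + U₀.1 * uL * (sL - uL) - U₁.1 * uR * (sR - uR)) /
      (U₀.1 * (sL - uL) - U₁.1 * (sR - uR)) := by
    rw [hstdef, Sstar, ← hsLdef, ← hsRdef, ← huL, ← huR, ← hpLdef, ← hpRdef]
  have hplus : ∀ V : St, alphaPlus γ V ≤ alphaMax γ V := fun V =>
    add_le_add_left (le_abs_self _) _
  have hminus : ∀ V : St, -alphaMax γ V ≤ alphaMinus γ V := fun V => by
    have := neg_abs_le (vel V)
    simp only [alphaMinus, alphaMax]
    linarith
  have hsRb : sR ≤ max (alphaMax γ U₀) (alphaMax γ U₁) :=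
    max_le_max (hplus U₀) (hplus U₁)
  have hsLb : -max (alphaMax γ U₀) (alphaMax γ U₁) ≤ sL :=
    le_min (le_trans (neg_le_neg (le_max_left _ _)) (hminus U₀))
      (le_trans (neg_le_neg (le_max_right _ _)) (hminus U₁))
  clear_value sL sR st uL uR pL pR cL cR
  have hsqL : cL ^ 2 ≤ (sL - uL) ^ 2 := by
    have h := sq_le_sq' (by linarith : -(uL - sL) ≤ cL) (by linarith : cL ≤ uL - sL)
    calc cL ^ 2 ≤ (uL - sL) ^ 2 := h
      _ = (sL - uL) ^ 2 := by ring
  have hsqR : cR ^ 2 ≤ (sR - uR) ^ 2 :=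
    sq_le_sq' (by linarith : -(sR - uR) ≤ cR) (by linarith : cR ≤ sR - uR)
  -- S_L < S_* < S_R
  have hstL : sL < st := by
    rw [hstval, lt_div_iff_of_neg hDneg]
    exact sstar_lb γ U₀.1 U₁.1 uL uR pL pR cL cR sL sR hγ hrL hrR hpL hpR hcL0 hcR0
      hcL2' hcR2' haL hsL2 haR
  have hstR : st < sR := by
    rw [hstval, div_lt_iff_of_neg hDneg]
    exact sstar_ub γ U₀.1 U₁.1 uL uR pL pR cL cR sL sR hγ hrL hrR hpL hpR hcL0 hcR0
      hcL2' hcR2' haL hsR1 haR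
  have hlsR : lam * sR ≤ 1 :=
    le_trans (mul_le_mul_of_nonneg_left hsRb hlam.le) hcfl
  have hlsL : -1 ≤ lam * sL := by
    have h := mul_le_mul_of_nonneg_left hsLb hlam.le
    linarith [h, hcfl]
  -- intermediate states
  set WL := Ustar γ sL st U₀ with hWLdef
  set WR := Ustar γ sR st U₁ with hWRdef
  have hWLmem : WL ∈ admG := by
    rw [hWLdef]
    refine ustar_mem γ hγ U₀ hU₀' sL st ?_ ?_
    · rw [← hpLdef, ← huL, ← hcL2]; exact hsqL
    · rw [← huL]; exact mul_pos_of_neg_of_neg haLneg (by linarith)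
  have hWRmem : WR ∈ admG := by
    rw [hWRdef]
    refine ustar_mem γ hγ U₁ hU₁' sR st ?_ ?_
    · rw [← hpRdef, ← huR, ← hcR2]; exact hsqR
    · rw [← huR]; exact mul_pos haRpos (by linarith)
  -- flux identities
  have hFL : Fstar γ sL st U₀ = st • WL +
      ((0 : ℝ), pL + U₀.1 * (sL - uL) * (st - uL), (pL + U₀.1 * (sL - uL) * (st - uL)) * st) := by
    have h := fstar_eq γ sL st U₀ hrL.ne' (by rw [← huL]; exact haLneg.ne) (by linarith)
    rw [← hpLdef, ← huL, ← hWLdef] at h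
    exact h
  have hFR : Fstar γ sR st U₁ = st • WR +
      ((0 : ℝ), pR + U₁.1 * (sR - uR) * (st - uR), (pR + U₁.1 * (sR - uR) * (st - uR)) * st) := by
    have h := fstar_eq γ sR st U₁ hrR.ne' (by rw [← huR]; exact haRpos.ne') (by linarith)
    rw [← hpRdef, ← huR, ← hWRdef] at h
    exact h
  have hps : pL + U₀.1 * (sL - uL) * (st - uL) = pR + U₁.1 * (sR - uR) * (st - uR) := by
    rw [hstval]
    exact pstar_scalar pL pR U₀.1 U₁.1 uL uR sL sR hDneg.ne
  rw [hps] at hFL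
  have d1 : eulerF γ U₁ - Fstar γ sR st U₁ = sR • (U₁ - WR) := by
    have e0 : Fstar γ sR st U₁ = eulerF γ U₁ + sR • (WR - U₁) := by
      rw [Fstar, ← hWRdef]
    rw [e0]; module
  have d2 : Fstar γ sR st U₁ - Fstar γ sL st U₀ = st • (WR - WL) := by
    rw [hFL, hFR]; module
  have d3 : Fstar γ sL st U₀ - eulerF γ U₀ = sL • (WL - U₀) := by
    have e0 : Fstar γ sL st U₀ = eulerF γ U₀ + sL • (WL - U₀) := by
      rw [Fstar, ← hWLdef]
    rw [e0]; module
  have hmaster : eulerF γ U₁ - eulerF γ U₀ =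
      sR • (U₁ - WR) + st • (WR - WL) + sL • (WL - U₀) := by
    rw [← d1, ← d2, ← d3]; abel
  rw [Fhllc, ← hsLdef, ← hsRdef, ← hstdef]
  split_ifs with h1 h2 h3
  · -- 0 ≤ S_L
    constructor
    · have key : U₁ - lam • (eulerF γ U₁ - eulerF γ U₀) =
          (1 - lam * sR) • U₁ + ((lam * sL) • U₀ +
            ((lam * (st - sL)) • WL + (lam * (sR - st)) • WR)) := by
        rw [hmaster]; module
      rw [key]
      exact admG_nsa hU₁' (admG_nsa hU₀' (admG_nsa hWLmem
        (admG_smul hWRmem (mul_pos hlam (by linarith)))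
        (mul_nonneg hlam.le (by linarith))) (mul_nonneg hlam.le h1)) (by linarith)
    · simpa using hU₀'
  · -- S_L < 0 ≤ S_*
    constructor
    · have e : eulerF γ U₁ - Fstar γ sL st U₀ = sR • (U₁ - WR) + st • (WR - WL) := by
        rw [← d1, ← d2]; abel
      have key : U₁ - lam • (eulerF γ U₁ - Fstar γ sL st U₀) =
          (1 - lam * sR) • U₁ + ((lam * st) • WL + (lam * (sR - st)) • WR) := by
        rw [e]; module
      rw [key]
      exact admG_nsa hU₁' (admG_nsa hWLmem
        (admG_smul hWRmem (mul_pos hlam (by linarith)))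
        (mul_nonneg hlam.le h2)) (by linarith)
    · push_neg at h1
      have key : U₀ - lam • (Fstar γ sL st U₀ - eulerF γ U₀) =
          (1 + lam * sL) • U₀ + (lam * (-sL)) • WL := by
        rw [d3]; module
      rw [key]
      exact admG_nsa hU₀' (admG_smul hWLmem (mul_pos hlam (by linarith))) (by linarith)
  · -- S_* < 0 ≤ S_R
    push_neg at h1 h2
    constructor
    · have key : U₁ - lam • (eulerF γ U₁ - Fstar γ sR st U₁) =
          (1 - lam * sR) • U₁ + (lam * sR) • WR := by
        rw [d1]; module
      rw [key]
      exact admG_convex2 hU₁' hWRmem (by linarith) (mul_nonneg hlam.le h3) (by ring)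
    · have e : Fstar γ sR st U₁ - eulerF γ U₀ = st • (WR - WL) + sL • (WL - U₀) := by
        rw [← d2, ← d3]; abel
      have key : U₀ - lam • (Fstar γ sR st U₁ - eulerF γ U₀) =
          (1 + lam * sL) • U₀ + ((lam * (st - sL)) • WL + (lam * (-st)) • WR) := by
        rw [e]; module
      rw [key]
      exact admG_nsa hU₀' (admG_nsa hWLmem
        (admG_smul hWRmem (mul_pos hlam (by linarith)))
        (mul_nonneg hlam.le (by linarith))) (by linarith)
  · -- S_R < 0
    push_neg at h1 h2 h3
    constructor
    · simpa using hU₁'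
    · have key : U₀ - lam • (eulerF γ U₁ - eulerF γ U₀) =
          (1 + lam * sL) • U₀ + ((lam * (-sR)) • U₁ +
            ((lam * (st - sL)) • WL + (lam * (sR - st)) • WR)) := by
        rw [hmaster]; module
      rw [key]
      exact admG_nsa hU₀' (admG_nsa hU₁' (admG_nsa hWLmem
        (admG_smul hWRmem (mul_pos hlam (by linarith)))
        (mul_nonneg hlam.le (by linarith))) (mul_nonneg hlam.le (by linarith))) (by linarith)
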